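/- Let ϖ be a nonzero element of m, R̂ = lim_n R/ϖ^n R, and for an R-module M let M̂ = lim_n M/ϖ^n M. If the R-module M/ϖM is of α-finite type, then M̂ is an R̂-module of α-finite type: for every γ ∈ m there exist k ∈ ℕ and an R̂-linear map R̂^k → M̂ whose cokernel is annihilated by the image of γ in R̂. -/

import Mathlib

open Pointwise

section Aux

variable {A : Type*} [CommRing A] {N M : Type*} [AddCommGroup N] [Module A N]
  [AddCommGroup M] [Module A M]

lemma aux_mem_span_smul_iff (r : A) (x : M) :
    x ∈ (Ideal.span {r} • (⊤ : Submodule A M)) ↔ ∃ c, x = r • c := by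
  rw [Submodule.ideal_span_singleton_smul, ← SetLike.mem_coe, Submodule.coe_pointwise_smul,
    Set.mem_smul_set]
  constructor
  · rintro ⟨c, -, rfl⟩; exact ⟨c, rfl⟩
  · rintro ⟨c, rfl⟩; exact ⟨c, trivial, rfl⟩

lemma aux_mem_span_pow_smul_iff (r : A) (n : ℕ) (x : M) :
    x ∈ ((Ideal.span {r}) ^ n • (⊤ : Submodule A M)) ↔ ∃ c, x = r ^ n • c := by
  rw [Ideal.span_singleton_pow]
  exact aux_mem_span_smul_iff _ _

/-- Key successive approximation construction. -/
lemma aux_rec (f : N →ₗ[A] M) (δ ϖ s : A) (hs : ϖ = δ * δ * s)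
    (hbase : ∀ y : M, ∃ a b, δ • y = f a + ϖ • b)
    (z : ℕ → M) (hz : ∀ n, ∃ c, z (n + 1) - z n = ϖ ^ n • c) :
    ∃ x : ℕ → N, (∀ n, ∃ d, x (n + 1) - x n = ϖ ^ n • d) ∧
      (∀ n, ∃ w, (δ * δ) • z n - f (x n) = ((δ * δ) * ϖ ^ n) • w) := by
  have step : ∀ (n : ℕ) (p : N × M), ((δ * δ) • z n - f p.1 = ((δ * δ) * ϖ ^ n) • p.2) →
      ∃ q : N × M, ((δ * δ) • z (n + 1) - f q.1 = ((δ * δ) * ϖ ^ (n + 1)) • q.2) ∧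
        ∃ d, q.1 - p.1 = ϖ ^ n • d := by
    intro n p hp
    obtain ⟨c, hc⟩ := hz n
    obtain ⟨a, b, hab⟩ := hbase (p.2 + c)
    obtain ⟨a₂, b₂, hab₂⟩ := hbase b
    refine ⟨(p.1 + ϖ ^ n • (δ • a + ϖ • a₂), s • b₂), ?_, ⟨δ • a + ϖ • a₂, by
      rw [add_sub_cancel_left]⟩⟩
    have hcoef : ((δ * δ) * ϖ ^ (n + 1)) • (s • b₂) = (ϖ ^ (n + 1) * ϖ) • b₂ := by
      rw [smul_smul]
      congr 1
      rw [hs]; ring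
    rw [hcoef, map_add, map_smul, map_add, map_smul, map_smul]
    linear_combination (norm := module) (δ * δ : A) • hc + hp + (δ * ϖ ^ n : A) • hab
      + (ϖ ^ (n + 1) : A) • hab₂
  choose q hq d hd using step
  let F : ∀ _ : ℕ, {p : N × M // (δ * δ) • z _ - f p.1 = ((δ * δ) * ϖ ^ _) • p.2} :=
    fun n => Nat.rec (motive := fun n => {p : N × M //
        (δ * δ) • z n - f p.1 = ((δ * δ) * ϖ ^ n) • p.2})
      ⟨(0, z 0), by simp⟩ (fun n ih => ⟨q n ih.1 ih.2, hq n ih.1 ih.2⟩) n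
  refine ⟨fun n => (F n).1.1, fun n => ⟨d n (F n).1 (F n).2, ?_⟩, fun n => ⟨(F n).1.2, (F n).2⟩⟩
  exact hd n (F n).1 (F n).2

end Aux

set_option maxHeartbeats 1000000 in
/-- Let `R` be the ring of a non-discrete height-one valuation `v` on a field `K`, with
maximal ideal `m`, and let `ϖ` be a nonzero element of `m`.  Let `R̂` and `M̂` be the
`ϖ`-adic completions of `R` and of an `R`-module `M`.  If `M/ϖM` is an `R`-module of
α-finite type, then `M̂` is an `R̂`-module of α-finite type. -/
theorem statement12 {K : Type*} [Field K] (v : K → ℝ)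
    (hv_mul : ∀ x y : K, x ≠ 0 → y ≠ 0 → v (x * y) = v x + v y)
    (hv_add : ∀ x y : K, x ≠ 0 → y ≠ 0 → x + y ≠ 0 → min (v x) (v y) ≤ v (x + y))
    (hv_dense : Dense (v '' {x : K | x ≠ 0}))
    (R : Subring K) (hR : ∀ x : K, x ∈ R ↔ x = 0 ∨ 0 ≤ v x)
    (m : Ideal R) (hm : ∀ x : R, x ∈ m ↔ (x : K) = 0 ∨ 0 < v (x : K))
    (ϖ : ↥R) (hϖ0 : ϖ ≠ 0) (hϖm : ϖ ∈ m)
    {M : Type*} [AddCommGroup M] [Module (↥R) M]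
    (hM : ∀ γ ∈ m, ∃ (k : ℕ)
      (u : (Fin k → ↥R) →ₗ[↥R] (M ⧸ (Ideal.span {ϖ} • (⊤ : Submodule (↥R) M)))),
      ∀ y, ∃ x, γ • y = u x) :
    ∀ γ ∈ m, ∃ (k : ℕ)
      (u : (Fin k → AdicCompletion (Ideal.span {ϖ}) (↥R))
            →ₗ[AdicCompletion (Ideal.span {ϖ}) (↥R)] AdicCompletion (Ideal.span {ϖ}) M),
      ∀ y, ∃ x, algebraMap (↥R) (AdicCompletion (Ideal.span {ϖ}) (↥R)) γ • y = u x := by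
  intro γ hγ
  set I : Ideal ↥R := Ideal.span {ϖ} with hI
  by_cases hγ0 : γ = 0
  · refine ⟨0, 0, fun y => ⟨0, ?_⟩⟩
    simp [hγ0]
  -- basic valuation facts
  have hv1 : v 1 = 0 := by
    have := hv_mul 1 1 one_ne_zero one_ne_zero
    rw [mul_one] at this; linarith
  have hvinv : ∀ x : K, x ≠ 0 → v x⁻¹ = - v x := by
    intro x hx
    have := hv_mul x x⁻¹ hx (inv_ne_zero hx)
    rw [mul_inv_cancel₀ hx, hv1] at this; linarith
  have hγK : (γ : K) ≠ 0 := fun h => hγ0 (Subtype.ext h)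
  have hϖK : (ϖ : K) ≠ 0 := fun h => hϖ0 (Subtype.ext h)
  have hvγ : 0 < v (γ : K) := ((hm γ).mp hγ).resolve_left hγK
  have hvϖ : 0 < v (ϖ : K) := ((hm ϖ).mp hϖm).resolve_left hϖK
  set ε : ℝ := min (v (γ : K)) (v (ϖ : K)) with hε
  have hεpos : 0 < ε := lt_min hvγ hvϖ
  obtain ⟨t, ht, htI⟩ := hv_dense.exists_mem_open isOpen_Ioo
    (⟨ε / 4, by constructor <;> [linarith; linarith]⟩ : (Set.Ioo (0 : ℝ) (ε / 2)).Nonempty)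
  obtain ⟨x₀, hx₀, rfl⟩ := ht
  simp only [Set.mem_setOf_eq] at hx₀
  obtain ⟨hvx₀, hvx₀'⟩ := htI
  set δ : ↥R := ⟨x₀, (hR x₀).mpr (Or.inr hvx₀.le)⟩ with hδ
  have hδm : δ ∈ m := (hm δ).mpr (Or.inr hvx₀)
  have hx₀sq : x₀ * x₀ ≠ 0 := mul_ne_zero hx₀ hx₀
  have hquot : ∀ y : K, y ≠ 0 → ε ≤ v y → ∃ ρ : ↥R, y = (x₀ * x₀) * (ρ : K) := by
    intro y hy hvy
    have hvq : v (y / (x₀ * x₀)) = v y - (v x₀ + v x₀) := by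
      rw [div_eq_mul_inv, hv_mul _ _ hy (inv_ne_zero hx₀sq), hvinv _ hx₀sq,
        hv_mul _ _ hx₀ hx₀]; ring
    refine ⟨⟨y / (x₀ * x₀), (hR _).mpr (Or.inr ?_)⟩, by field_simp⟩
    rw [hvq]; linarith
  obtain ⟨ρ, hρ⟩ := hquot (γ : K) hγK (min_le_left _ _)
  obtain ⟨s, hsK⟩ := hquot (ϖ : K) hϖK (min_le_right _ _)
  have hγfact : γ = δ * δ * ρ := Subtype.ext (by push_cast; exact hρ)
  have hsfact : ϖ = δ * δ * s := Subtype.ext (by push_cast; exact hsK)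
  -- lift the map mod ϖ
  obtain ⟨k, u, hu⟩ := hM δ hδm
  choose g hg using fun i : Fin k =>
    Submodule.Quotient.mk_surjective (Ideal.span {ϖ} • (⊤ : Submodule (↥R) M))
      (u (Pi.single i 1))
  set f : (Fin k → ↥R) →ₗ[↥R] M := Fintype.linearCombination (↥R) g with hf
  have hfu : ∀ a : Fin k → ↥R, Submodule.Quotient.mk (p := Ideal.span {ϖ} • ⊤) (f a) = u a := by
    have : (Submodule.mkQ (Ideal.span {ϖ} • (⊤ : Submodule (↥R) M))).comp f = u := by
      apply (Pi.basisFun (↥R) (Fin k)).ext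
      intro i
      simp [hf, Pi.basisFun_apply, Fintype.linearCombination_apply_single, hg]
    intro a
    simpa using LinearMap.congr_fun this a
  have hbase : ∀ y : M, ∃ a b, δ • y = f a + ϖ • b := by
    intro y
    obtain ⟨a, ha⟩ := hu (Submodule.Quotient.mk y)
    rw [← hfu a] at ha
    have hmem : δ • y - f a ∈ (Ideal.span {ϖ} • (⊤ : Submodule (↥R) M)) := by
      rw [← Submodule.Quotient.eq]
      simpa using ha
    obtain ⟨b, hb⟩ := (aux_mem_span_smul_iff ϖ _).mp hmem
    exact ⟨a, b, by rw [← sub_eq_iff_eq_add']; exact hb⟩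
  -- the completed map
  refine ⟨k, (AdicCompletion.map I f).comp
    (AdicCompletion.piEquivFin I k).symm.toLinearMap, ?_⟩
  intro y
  obtain ⟨z, rfl⟩ := AdicCompletion.mk_surjective I M y
  have hz : ∀ n, ∃ c, z (n + 1) - z n = (ϖ : ↥R) ^ n • c := by
    intro n
    have := (SModEq.sub_mem.mp (z.property (Nat.le_succ n)))
    obtain ⟨c, hc⟩ := (aux_mem_span_pow_smul_iff ϖ n _).mp this
    exact ⟨-c, by rw [← neg_sub, hc, smul_neg]⟩
  obtain ⟨xs, hxdiff, hxinv⟩ := aux_rec f δ ϖ s hsfact hbase (fun n => z n) hz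
  have hcau : ∀ n, xs n ≡ xs (n + 1) [SMOD (I ^ n • ⊤ : Submodule (↥R) (Fin k → ↥R))] := by
    intro n
    rw [SModEq.sub_mem]
    obtain ⟨dd, hdd⟩ := hxdiff n
    refine (aux_mem_span_pow_smul_iff ϖ n _).mpr ⟨-dd, ?_⟩
    rw [← neg_sub, hdd, smul_neg]
  set xc : AdicCompletion.AdicCauchySequence I (Fin k → ↥R) :=
    AdicCompletion.AdicCauchySequence.mk (I := I) (f := xs) (h := hcau) with hxc
  refine ⟨AdicCompletion.piEquivFin I k (AdicCompletion.mk I _ (ρ • xc)), ?_⟩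
  rw [LinearMap.comp_apply, LinearEquiv.coe_toLinearMap, LinearEquiv.symm_apply_apply,
    AdicCompletion.map_mk, algebraMap_smul, ← map_smul]
  apply AdicCompletion.ext
  intro n
  simp only [AdicCompletion.mk_apply_coe, Submodule.mkQ_apply]
  rw [Submodule.Quotient.eq]
  obtain ⟨w, hw⟩ := hxinv n
  refine (aux_mem_span_pow_smul_iff ϖ n _).mpr ⟨(ρ * (δ * δ)) • w, ?_⟩
  have hmapval : (AdicCompletion.AdicCauchySequence.map I f (ρ • xc)) n = ρ • f (xs n) := by
    simp [hxc]
  have hzval : ((γ • z : AdicCompletion.AdicCauchySequence I M)) n = γ • z n := rfl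
  rw [hzval, hmapval, hγfact]
  linear_combination (norm := module) (ρ : ↥R) • hw
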